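/- Let μ = Σ_{j=1}^N ω_j δ_{x_j} and ν = Σ_{i=1}^M ϑ_i δ_{y_i} be discrete probability measures on ℝ. Then μ ≤_c ν if and only if there exist q_{j,i} ≥ 0 satisfying Σ_i q_{j,i} = ω_j for all j, Σ_j q_{j,i} = ϑ_i for all i, and Σ_i q_{j,i}(y_i − x_j) = 0 for all j. -/

import Mathlib

open Finset

open scoped RealInnerProductSpace

/-- Convexity of a finite supremum of convex functions. -/
lemma convexOn_sup' {ι : Type*} (s : Finset ι) (hs : s.Nonempty) (f : ι → ℝ → ℝ)
    (hf : ∀ i ∈ s, ConvexOn ℝ Set.univ (f i)) :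
    ConvexOn ℝ Set.univ (fun t => s.sup' hs (fun i => f i t)) := by
  induction hs using Finset.Nonempty.cons_induction with
  | singleton i =>
    have h : ∀ t, ({i} : Finset ι).sup' (Finset.singleton_nonempty i) (fun j => f j t)
        = f i t := fun t => Finset.sup'_singleton _
    simp only [h]
    exact hf i (Finset.mem_singleton_self i)
  | cons i s hi hs ih =>
    have h2 := ih (fun j hj => hf j (Finset.mem_cons_of_mem hj))
    have h1 : ConvexOn ℝ Set.univ (f i) := hf i (Finset.mem_cons_self i s)
    have h : ∀ t, (Finset.cons i s hi).sup' (Finset.cons_nonempty hi) (fun j => f j t)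
        = f i t ⊔ s.sup' hs (fun j => f j t) := fun t => Finset.sup'_cons hs _
    simp only [h]
    exact h1.sup h2

/-- Affine functions are convex. -/
lemma convexOn_affine (c d : ℝ) : ConvexOn ℝ Set.univ (fun t => c * t + d) := by
  refine ⟨convex_univ, ?_⟩
  intro p _ q _ a b _ _ hab
  simp only [smul_eq_mul]
  apply le_of_eq
  linear_combination (-d) * hab

/-- In `EuclideanSpace`, each coordinate distance is bounded by the distance. -/
lemma euclidean_coord_dist_le {ι : Type*} [Fintype ι] (a b : EuclideanSpace ℝ ι) (k : ι) :
    dist (a k) (b k) ≤ dist a b := by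
  rw [EuclideanSpace.dist_eq]
  calc dist (a k) (b k) = Real.sqrt (dist (a k) (b k) ^ 2) := by
        rw [Real.sqrt_sq dist_nonneg]
    _ ≤ Real.sqrt (∑ i, dist (a i) (b i) ^ 2) := by
        apply Real.sqrt_le_sqrt
        exact Finset.single_le_sum (f := fun i => dist (a i) (b i) ^ 2)
          (fun i _ => sq_nonneg _) (Finset.mem_univ k)

/-- Strassen's theorem in the discrete two-marginal case: for discrete probability measures
`μ = Σ ω_j δ_{x_j}` and `ν = Σ ϑ_i δ_{y_i}`, convex order `μ ≤_c ν` holds iff the discrete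
martingale transport problem is feasible. -/
theorem stmt2 (N M : ℕ) (x : Fin N → ℝ) (y : Fin M → ℝ) (ω : Fin N → ℝ) (ϑ : Fin M → ℝ)
    (hω : ∀ j, 0 ≤ ω j) (hϑ : ∀ i, 0 ≤ ϑ i)
    (hω1 : ∑ j, ω j = 1) (hϑ1 : ∑ i, ϑ i = 1) :
    (∀ f : ℝ → ℝ, ConvexOn ℝ Set.univ f →
        ∑ j, ω j * f (x j) ≤ ∑ i, ϑ i * f (y i)) ↔
    (∃ q : Fin N → Fin M → ℝ, (∀ j i, 0 ≤ q j i) ∧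
        (∀ j, ∑ i, q j i = ω j) ∧ (∀ i, ∑ j, q j i = ϑ i) ∧
        (∀ j, ∑ i, q j i * (y i - x j) = 0)) := by
  constructor
  · -- hard direction
    intro hconv
    by_contra hq
    -- setup for Farkas
    let A₀ : (Fin N → Fin M → ℝ) →ₗ[ℝ] ((Fin N ⊕ (Fin M ⊕ Fin N)) → ℝ) :=
      { toFun := fun q => fun k => Sum.rec (fun j => ∑ i, q j i)
          (fun k' => Sum.rec (fun i => ∑ j, q j i) (fun j => ∑ i, q j i * (y i - x j)) k') k
        map_add' := by
          intro q r
          funext k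
          rcases k with j | i | j <;>
            simp [Finset.sum_add_distrib, add_mul]
        map_smul' := by
          intro c q
          funext k
          rcases k with j | i | j <;>
            simp [Finset.mul_sum, mul_assoc] }
    let A : (Fin N → Fin M → ℝ) →ₗ[ℝ] EuclideanSpace ℝ (Fin N ⊕ (Fin M ⊕ Fin N)) :=
      (WithLp.linearEquiv 2 ℝ ((Fin N ⊕ (Fin M ⊕ Fin N)) → ℝ)).symm.toLinearMap ∘ₗ A₀
    have hA : ∀ q k, A q k = A₀ q k := fun q k => rfl
    have hAcont : Continuous A := A.continuous_of_finiteDimensional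
    let b : EuclideanSpace ℝ (Fin N ⊕ (Fin M ⊕ Fin N)) :=
      (WithLp.linearEquiv 2 ℝ ((Fin N ⊕ (Fin M ⊕ Fin N)) → ℝ)).symm
        (fun k => Sum.rec (fun j => ω j)
          (fun k' => Sum.rec (fun i => ϑ i) (fun _ => (0:ℝ)) k') k)
    have hb1 : ∀ j, b (Sum.inl j) = ω j := fun j => rfl
    have hb2 : ∀ i, b (Sum.inr (Sum.inl i)) = ϑ i := fun i => rfl
    have hb3 : ∀ j, b (Sum.inr (Sum.inr j)) = 0 := fun j => rfl
    -- the image cone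
    let T : ConvexCone ℝ (EuclideanSpace ℝ (Fin N ⊕ (Fin M ⊕ Fin N))) :=
      { carrier := {v | ∃ q : Fin N → Fin M → ℝ, (∀ j i, 0 ≤ q j i) ∧ A q = v}
        smul_mem' := by
          rintro c hc v ⟨q, hq0, rfl⟩
          exact ⟨c • q, fun j i => mul_nonneg hc.le (hq0 j i), A.map_smul c q⟩
        add_mem' := by
          rintro v ⟨q, hq0, rfl⟩ w ⟨r, hr0, rfl⟩
          exact ⟨q + r, fun j i => add_nonneg (hq0 j i) (hr0 j i), A.map_add q r⟩ }
    -- b is not in the closure of T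
    have hbT : b ∉ T.closure := by
      intro hb
      rw [ConvexCone.mem_closure] at hb
      -- compactness argument
      let Q : Set (Fin N → Fin M → ℝ) := Set.Icc 0 (fun _ _ => 2)
      have hQcomp : IsCompact Q := isCompact_Icc
      have hAQ : IsClosed (A '' Q) := (hQcomp.image hAcont).isClosed
      have hωle : ∀ j, ω j ≤ 1 := by
        intro j
        rw [← hω1]
        exact Finset.single_le_sum (fun j' _ => hω j') (Finset.mem_univ j)
      have hbAQ : b ∈ A '' Q := by
        rw [← hAQ.closure_eq]
        rw [Metric.mem_closure_iff]
        intro ε hε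
        rw [Metric.mem_closure_iff] at hb
        obtain ⟨v, ⟨q, hq0, rfl⟩, hdist⟩ := hb (min ε 1) (lt_min hε one_pos)
        refine ⟨A q, ⟨q, ⟨?_, ?_⟩, rfl⟩, hdist.trans_le (min_le_left _ _)⟩
        · intro j i
          exact hq0 j i
        · intro j
          intro i
          have h1 : dist (A q (Sum.inl j)) (b (Sum.inl j)) ≤ dist (A q) b :=
            euclidean_coord_dist_le _ _ _
          have h2 : dist (A q) b < 1 := by
            rw [dist_comm] at hdist
            exact hdist.trans_le (min_le_right _ _)
          have h3 : (∑ i', q j i') ≤ ω j + 1 := by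
            have habs : |(∑ i', q j i') - ω j| < 1 := by
              have h4 : dist (A q (Sum.inl j)) (b (Sum.inl j)) < 1 := lt_of_le_of_lt h1 h2
              rw [hA, hb1, Real.dist_eq] at h4
              exact h4
            linarith [abs_lt.mp habs |>.2]
          calc q j i ≤ ∑ i', q j i' :=
                Finset.single_le_sum (fun i' _ => hq0 j i') (Finset.mem_univ i)
            _ ≤ ω j + 1 := h3
            _ ≤ 2 := by linarith [hωle j]
      obtain ⟨q, hqQ, hAqb⟩ := hbAQ
      apply hq
      refine ⟨q, fun j i => hqQ.1 j i, ?_, ?_, ?_⟩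
      · intro j
        have h := congrArg (fun v => v (Sum.inl j)) hAqb
        rw [hA] at h
        rw [← hb1 j, ← h]
        rfl
      · intro i
        have h := congrArg (fun v => v (Sum.inr (Sum.inl i))) hAqb
        rw [hA] at h
        rw [← hb2 i, ← h]
        rfl
      · intro j
        have h := congrArg (fun v => v (Sum.inr (Sum.inr j))) hAqb
        rw [hA] at h
        rw [← hb3 j, ← h]
        rfl
    -- separation
    have hTne : ((T.closure : ConvexCone ℝ (EuclideanSpace ℝ (Fin N ⊕ (Fin M ⊕ Fin N)))) :
        Set (EuclideanSpace ℝ (Fin N ⊕ (Fin M ⊕ Fin N)))).Nonempty :=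
      ⟨A 0, subset_closure ⟨0, fun j i => le_refl 0, rfl⟩⟩
    have hTcl : IsClosed ((T.closure : ConvexCone ℝ (EuclideanSpace ℝ (Fin N ⊕ (Fin M ⊕ Fin N)))) :
        Set (EuclideanSpace ℝ (Fin N ⊕ (Fin M ⊕ Fin N)))) := isClosed_closure
    obtain ⟨w, hw1, hw2⟩ :=
      ProperCone.hyperplane_separation' (⟨(T.closure).toPointedCone
        (.of_nonempty_of_isClosed hTne hTcl), hTcl⟩ :
          ProperCone ℝ (EuclideanSpace ℝ (Fin N ⊕ (Fin M ⊕ Fin N)))) (x₀ := b) hbT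
    rw [real_inner_comm] at hw2
    -- extract dual variables
    set a : Fin N → ℝ := fun j => w (Sum.inl j) with ha
    set β : Fin M → ℝ := fun i => w (Sum.inr (Sum.inl i)) with hβ
    set c : Fin N → ℝ := fun j => w (Sum.inr (Sum.inr j)) with hc
    have hdual : ∀ j i, 0 ≤ a j + β i + c j * (y i - x j) := by
      intro j i
      -- apply hw1 to the elementary q
      let e : Fin N → Fin M → ℝ := fun j' i' => if j' = j ∧ i' = i then 1 else 0
      have he0 : ∀ j' i', 0 ≤ e j' i' := by
        intro j' i'; simp only [e]; positivity
      have hmem : A e ∈ T.closure := subset_closure ⟨e, he0, rfl⟩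
      have hle := hw1 (A e) hmem
      have hinner : ⟪(A e), w⟫ = a j + β i + c j * (y i - x j) := by
        rw [PiLp.inner_apply]
        rw [Fintype.sum_sum_type, Fintype.sum_sum_type]
        have h1 : ∀ j', (A e (Sum.inl j')) = if j' = j then (1:ℝ) else 0 := by
          intro j'
          rw [hA]
          by_cases hj : j' = j
          · subst hj
            simp [A₀, e, Finset.sum_ite_eq']
          · simp [A₀, e, hj]
        have h2 : ∀ i', (A e (Sum.inr (Sum.inl i'))) = if i' = i then (1:ℝ) else 0 := by
          intro i'
          rw [hA]
          by_cases hi' : i' = i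
          · subst hi'
            simp [A₀, e, Finset.sum_ite_eq']
          · simp [A₀, e, hi']
        have h3 : ∀ j', (A e (Sum.inr (Sum.inr j'))) =
            if j' = j then (y i - x j) else 0 := by
          intro j'
          rw [hA]
          by_cases hj : j' = j
          · subst hj
            simp [A₀, e, Finset.sum_ite_eq']
          · simp [A₀, e, hj]
        simp only [RCLike.inner_apply, starRingEnd_apply, star_trivial, h1, h2, h3,
          ite_mul, one_mul, zero_mul, mul_ite, mul_one, mul_zero]
        rw [Finset.sum_ite_eq' Finset.univ j (fun j' => w (Sum.inl j')),
          Finset.sum_ite_eq' Finset.univ i (fun i' => w (Sum.inr (Sum.inl i'))),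
          Finset.sum_ite_eq' Finset.univ j (fun j' => w (Sum.inr (Sum.inr j')) * (y i - x j))]
        simp only [Finset.mem_univ, if_true]
        ring
      rw [hinner] at hle
      exact hle
    have hwb : ⟪w, b⟫ = ∑ j, a j * ω j + ∑ i, β i * ϑ i := by
      rw [PiLp.inner_apply, Fintype.sum_sum_type, Fintype.sum_sum_type]
      simp only [RCLike.inner_apply, starRingEnd_apply, star_trivial]
      have hz : ∑ j, b (Sum.inr (Sum.inr j)) * w (Sum.inr (Sum.inr j)) = 0 := by
        apply Finset.sum_eq_zero
        intro j _
        rw [hb3 j, zero_mul]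
      simp only [hb1, hb2]
      rw [hz, add_zero]
      exact congrArg₂ (· + ·) (Finset.sum_congr rfl fun _ _ => mul_comm _ _)
        (Finset.sum_congr rfl fun _ _ => mul_comm _ _)
    rw [hwb] at hw2
    -- define the convex function
    have hNe : (Finset.univ : Finset (Fin N)).Nonempty := by
      by_contra hNn
      rw [Finset.not_nonempty_iff_eq_empty] at hNn
      have h10 := hω1
      rw [hNn, Finset.sum_empty] at h10
      norm_num at h10
    let g : ℝ → ℝ := fun t => Finset.univ.sup' hNe (fun j => (- c j) * t + (c j * x j - a j))
    have hgconv : ConvexOn ℝ Set.univ g :=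
      convexOn_sup' _ hNe _ (fun j _ => convexOn_affine _ _)
    have hgx : ∀ j, -a j ≤ g (x j) := by
      intro j
      have hle := Finset.le_sup' (fun j' => (- c j') * (x j) + (c j' * x j' - a j'))
        (Finset.mem_univ j)
      calc -a j = (- c j) * (x j) + (c j * x j - a j) := by ring
        _ ≤ g (x j) := hle
    have hgy : ∀ i, g (y i) ≤ β i := by
      intro i
      apply Finset.sup'_le
      intro j _
      have := hdual j i
      linarith
    have hkey := hconv g hgconv
    have h1 : ∑ j, ω j * (-a j) ≤ ∑ j, ω j * g (x j) :=
      Finset.sum_le_sum (fun j _ => mul_le_mul_of_nonneg_left (hgx j) (hω j))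
    have h2 : ∑ i, ϑ i * g (y i) ≤ ∑ i, ϑ i * β i :=
      Finset.sum_le_sum (fun i _ => mul_le_mul_of_nonneg_left (hgy i) (hϑ i))
    have h3 : ∑ j, ω j * (-a j) = -(∑ j, a j * ω j) := by
      rw [← Finset.sum_neg_distrib]
      congr 1; funext j; ring
    have h4 : ∑ i, ϑ i * β i = ∑ i, β i * ϑ i := by
      congr 1; funext i; ring
    linarith
  · -- easy direction: Jensen
    rintro ⟨q, hq0, hqrow, hqcol, hqmart⟩ f hf
    have key : ∀ j, ω j * f (x j) ≤ ∑ i, q j i * f (y i) := by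
      intro j
      by_cases hωj : ω j = 0
      · have hqz : ∀ i, q j i = 0 := by
          intro i
          have hsum : ∑ i, q j i = 0 := by rw [hqrow j, hωj]
          exact (Finset.sum_eq_zero_iff_of_nonneg (fun i _ => hq0 j i)).mp hsum i
            (Finset.mem_univ i)
        simp [hωj, hqz]
      · have hωjpos : 0 < ω j := lt_of_le_of_ne (hω j) (Ne.symm hωj)
        set wt : Fin M → ℝ := fun i => q j i / ω j with hwt
        have hwt0 : ∀ i ∈ Finset.univ, 0 ≤ wt i :=
          fun i _ => div_nonneg (hq0 j i) (hω j)
        have hwt1 : ∑ i, wt i = 1 := by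
          rw [hwt]
          rw [← Finset.sum_div, hqrow j, div_self hωj]
        have hbar : ∑ i, wt i • y i = x j := by
          have hm : ∑ i, q j i * y i = ω j * x j := by
            have hmart := hqmart j
            have hexp : ∑ i, q j i * (y i - x j) = ∑ i, q j i * y i - (∑ i, q j i) * x j := by
              rw [Finset.sum_mul, ← Finset.sum_sub_distrib]
              congr 1; funext i; ring
            rw [hexp, hqrow j] at hmart
            linarith
          simp only [smul_eq_mul, hwt]
          simp only [show ∀ i : Fin M, q j i / ω j * y i = (q j i * y i) / ω j
            from fun i => by ring]
          rw [← Finset.sum_div, hm, mul_comm, mul_div_assoc, div_self hωj, mul_one]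
        have hjensen := hf.map_sum_le hwt0 hwt1 (fun i _ => Set.mem_univ (y i))
        rw [hbar] at hjensen
        calc ω j * f (x j) ≤ ω j * ∑ i, wt i * f (y i) :=
              mul_le_mul_of_nonneg_left hjensen (hω j)
          _ = ∑ i, q j i * f (y i) := by
              rw [Finset.mul_sum]
              congr 1; funext i
              rw [hwt]
              field_simp
    calc ∑ j, ω j * f (x j) ≤ ∑ j, ∑ i, q j i * f (y i) :=
          Finset.sum_le_sum (fun j _ => key j)
      _ = ∑ i, (∑ j, q j i) * f (y i) := by
          rw [Finset.sum_comm]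
          congr 1; funext i
          rw [Finset.sum_mul]
      _ = ∑ i, ϑ i * f (y i) := by
          congr 1; funext i; rw [hqcol i]
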